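/- Any sub-root function ψ : [0,∞) → [0,∞) (nonnegative, nondecreasing, with r ↦ ψ(r)/√r nonincreasing on (0,∞)) that is not identically zero and is continuous has a unique positive fixed point r* with ψ(r*) = r*. -/

import Mathlib

/-- A sub-root function (nonnegative, nondecreasing on `[0,∞)`, with `r ↦ ψ r / √r`
nonincreasing on `(0,∞)`) which is continuous and not identically zero on `[0,∞)`
has a unique positive fixed point. -/
theorem stmt_6 (ψ : ℝ → ℝ)
    (hnn : ∀ r, 0 ≤ r → 0 ≤ ψ r)
    (hmono : MonotoneOn ψ (Set.Ici (0 : ℝ)))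
    (hsub : ∀ r s : ℝ, 0 < r → r ≤ s → ψ s / Real.sqrt s ≤ ψ r / Real.sqrt r)
    (hcont : ContinuousOn ψ (Set.Ici (0 : ℝ)))
    (hnz : ∃ r : ℝ, 0 ≤ r ∧ ψ r ≠ 0) :
    ∃! r : ℝ, 0 < r ∧ ψ r = r := by
  -- uniqueness helper
  have uniq : ∀ x y : ℝ, 0 < x → 0 < y → ψ x = x → ψ y = y → x ≤ y → x = y := by
    intro x y hx hy hfx hfy hxy
    have h := hsub x y hx hxy
    rw [hfx, hfy, Real.div_sqrt, Real.div_sqrt] at h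
    have hy2 : y = Real.sqrt y * Real.sqrt y := (Real.mul_self_sqrt hy.le).symm
    have hx2 : x = Real.sqrt x * Real.sqrt x := (Real.mul_self_sqrt hx.le).symm
    nlinarith [Real.sqrt_nonneg x, Real.sqrt_nonneg y]
  -- find p > 0 with ψ p > 0
  obtain ⟨p, hp, hψp⟩ : ∃ p : ℝ, 0 < p ∧ 0 < ψ p := by
    obtain ⟨r0, hr0, hψr0⟩ := hnz
    rcases eq_or_lt_of_le hr0 with h | h
    · have h0 : 0 < ψ 0 := (hnn 0 le_rfl).lt_of_ne (fun he => hψr0 (by rw [← h]; exact he.symm))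
      exact ⟨1, one_pos, lt_of_lt_of_le h0 (hmono (Set.mem_Ici.mpr le_rfl) (by norm_num) zero_le_one)⟩
    · exact ⟨r0, h, (hnn r0 hr0).lt_of_ne (Ne.symm hψr0)⟩
  set c : ℝ := ψ p / Real.sqrt p with hc
  have hsp : 0 < Real.sqrt p := Real.sqrt_pos.mpr hp
  have hcpos : 0 < c := div_pos hψp hsp
  -- upper bound for large r, lower bound for small r
  have hub : ∀ r, p ≤ r → ψ r ≤ c * Real.sqrt r := by
    intro r hr
    have hr0 : 0 < r := lt_of_lt_of_le hp hr
    have := hsub p r hp hr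
    have hsr : 0 < Real.sqrt r := Real.sqrt_pos.mpr hr0
    calc ψ r = ψ r / Real.sqrt r * Real.sqrt r := by field_simp
    _ ≤ c * Real.sqrt r := by exact mul_le_mul_of_nonneg_right this hsr.le
  have hlb : ∀ r, 0 < r → r ≤ p → c * Real.sqrt r ≤ ψ r := by
    intro r hr0 hr
    have := hsub r p hr0 hr
    have hsr : 0 < Real.sqrt r := Real.sqrt_pos.mpr hr0
    calc c * Real.sqrt r ≤ ψ r / Real.sqrt r * Real.sqrt r :=
      mul_le_mul_of_nonneg_right this hsr.le
    _ = ψ r := by field_simp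
  set a : ℝ := min p (c ^ 2) / 2 with hadef
  set b : ℝ := max p (c ^ 2) + 1 with hbdef
  have ha0 : 0 < a := by
    have : 0 < min p (c ^ 2) := lt_min hp (by positivity)
    positivity
  have hamin : a < min p (c ^ 2) := by
    have : 0 < min p (c ^ 2) := lt_min hp (by positivity)
    linarith
  have hab : a ≤ b := by
    have h1 : min p (c ^ 2) ≤ max p (c ^ 2) := (min_le_left _ _).trans (le_max_left _ _)
    linarith
  -- ψ a > a
  have hfa : a < ψ a := by
    have h1 : c * Real.sqrt a ≤ ψ a := hlb a ha0 (hamin.le.trans (min_le_left _ _))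
    have h2 : Real.sqrt a < c := by
      have := Real.sqrt_lt_sqrt ha0.le (lt_of_lt_of_le hamin (min_le_right _ _))
      rwa [Real.sqrt_sq hcpos.le] at this
    have h3 : a = Real.sqrt a * Real.sqrt a := (Real.mul_self_sqrt ha0.le).symm
    nlinarith [Real.sqrt_pos.mpr ha0]
  -- ψ b < b
  have hb0 : 0 < b := lt_of_lt_of_le hp (by rw [hbdef]; nlinarith [le_max_left p (c ^ 2)])
  have hfb : ψ b < b := by
    have h1 : ψ b ≤ c * Real.sqrt b := hub b (by rw [hbdef]; nlinarith [le_max_left p (c ^ 2)])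
    have h2 : c < Real.sqrt b := by
      have hc2 : c ^ 2 < b := by rw [hbdef]; nlinarith [le_max_right p (c ^ 2)]
      have := Real.sqrt_lt_sqrt (by positivity) hc2
      rwa [Real.sqrt_sq hcpos.le] at this
    have h3 : b = Real.sqrt b * Real.sqrt b := (Real.mul_self_sqrt hb0.le).symm
    nlinarith [Real.sqrt_pos.mpr hb0]
  -- IVT for f r = ψ r - r
  have hsub_cont : ContinuousOn (fun r => ψ r - r) (Set.Icc a b) := by
    apply ContinuousOn.sub
    · exact hcont.mono (fun x hx => le_trans ha0.le hx.1)
    · exact continuousOn_id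
  have h0mem : (0 : ℝ) ∈ Set.Icc (ψ b - b) (ψ a - a) := ⟨by linarith, by linarith⟩
  obtain ⟨r, hrmem, hfr⟩ := intermediate_value_Icc' hab hsub_cont h0mem
  have hr0 : 0 < r := lt_of_lt_of_le ha0 hrmem.1
  have hfix : ψ r = r := by dsimp at hfr; linarith
  refine ⟨r, ⟨hr0, hfix⟩, ?_⟩
  rintro s ⟨hs0, hsfix⟩
  rcases le_total s r with h | h
  · exact uniq s r hs0 hr0 hsfix hfix h
  · exact (uniq r s hr0 hs0 hfix hsfix h).symm
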